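/- (Kolmogorov–Landau inequality on the unit interval) For each integer m ≥ 2 there exists a constant C_m > 0 such that for all w ∈ W^{m,∞}([0,1]), all k ∈ {1,…,m−1}, and all u ∈ (0,1], one has ‖w^{(k)}‖_{L^∞([0,1])} ≤ C_m ( ‖w‖_{L^∞([0,1])} / u^k + u^{m−k} ‖w^{(m)}‖_{L^∞([0,1])} ). -/

import Mathlib

open Set Finset

lemma iterDerivWithin_eq {n N : ℕ} {f : ℝ → ℝ} {s : Set ℝ} {x : ℝ}
    (hf : ContDiff ℝ (N : ℕ∞) f) (hn : n ≤ N) (hs : UniqueDiffOn ℝ s) (hx : x ∈ s) :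
    iteratedDerivWithin n f s x = iteratedDeriv n f x := by
  have h1 : HasFTaylorSeriesUpTo (N : ℕ∞) f (ftaylorSeries ℝ f) :=
    (contDiff_iff_ftaylorSeries).1 hf
  have h2 := (h1.hasFTaylorSeriesUpToOn s).eq_iteratedFDerivWithin_of_uniqueDiffOn
    (m := n) (by exact_mod_cast hn) hs hx
  rw [iteratedDerivWithin_eq_iteratedFDerivWithin, iteratedDeriv_eq_iteratedFDeriv, ← h2]
  rfl

lemma iterDeriv_affine {N : ℕ} {f : ℝ → ℝ} (hf : ContDiff ℝ (N : ℕ∞) f) (x c : ℝ) :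
    ∀ n : ℕ, n ≤ N → ∀ t : ℝ,
      iteratedDeriv n (fun s => f (x + c * s)) t = c ^ n * iteratedDeriv n f (x + c * t) := by
  intro n
  induction n with
  | zero => intro _ t; simp
  | succ n IH =>
    intro hn t
    have hn' : n ≤ N := Nat.le_of_succ_le hn
    rw [iteratedDeriv_succ]
    have hfun : iteratedDeriv n (fun s => f (x + c * s)) =
        fun t => c ^ n * iteratedDeriv n f (x + c * t) := funext (IH hn')
    rw [hfun]
    have hdiff : Differentiable ℝ (iteratedDeriv n f) :=
      hf.differentiable_iteratedDeriv n (by exact_mod_cast hn)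
    have h1 : HasDerivAt (fun s : ℝ => x + c * s) c t := by
      simpa using ((hasDerivAt_id t).const_mul c).const_add x
    have h3 : HasDerivAt (fun s => c ^ n * iteratedDeriv n f (x + c * s))
        (c ^ n * (deriv (iteratedDeriv n f) (x + c * t) * c)) t :=
      (((hdiff (x + c * t)).hasDerivAt).comp t h1).const_mul _
    rw [h3.deriv, iteratedDeriv_succ]
    ring

lemma exists_coeffs (m k : ℕ) :
    ∃ μ : Fin m → ℝ, ∀ j : ℕ, j < m →
      ∑ i : Fin m, μ i * (i : ℝ) ^ j = if j = k then (k.factorial : ℝ) else 0 := by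
  set A : Matrix (Fin m) (Fin m) ℝ := fun j i => (i : ℝ) ^ (j : ℕ) with hA
  have hdet : A.det ≠ 0 := by
    have : A = (Matrix.vandermonde fun i : Fin m => (i : ℝ)).transpose := by
      ext j i; simp [hA, Matrix.vandermonde]
    rw [this, Matrix.det_transpose]
    rw [Matrix.det_vandermonde_ne_zero_iff]
    intro a b hab
    simp only at hab
    exact Fin.ext (by exact_mod_cast hab)
  set b : Fin m → ℝ := fun j => if (j : ℕ) = k then (k.factorial : ℝ) else 0 with hb
  refine ⟨A⁻¹.mulVec b, ?_⟩
  intro j hj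
  have key : A.mulVec (A⁻¹.mulVec b) = b := by
    rw [Matrix.mulVec_mulVec, Matrix.mul_nonsing_inv A (isUnit_iff_ne_zero.2 hdet),
      Matrix.one_mulVec]
  have := congrFun key ⟨j, hj⟩
  rw [Matrix.mulVec, dotProduct] at this
  simpa [hA, hb, mul_comm] using this


lemma pointwise_bound {n : ℕ} (hn : 1 ≤ n) {w : ℝ → ℝ}
    (hw : ContDiff ℝ ((n + 1 : ℕ) : ℕ∞) w)
    {k : ℕ} (hk1 : 1 ≤ k) (hk2 : k ≤ n) (μ : Fin (n + 1) → ℝ)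
    (hμ : ∀ j : ℕ, j < n + 1 →
      ∑ i : Fin (n + 1), μ i * (i : ℝ) ^ j = if j = k then (k.factorial : ℝ) else 0)
    {M0 Mm : ℝ} (hM0 : ∀ y ∈ Icc (0 : ℝ) 1, |w y| ≤ M0)
    (hMm : ∀ y ∈ Icc (0 : ℝ) 1, |iteratedDeriv (n + 1) w y| ≤ Mm)
    {u : ℝ} (hu0 : 0 < u) (hu1 : u ≤ 1) {x : ℝ} (hx : x ∈ Icc (0 : ℝ) 1) :
    |iteratedDeriv k w x| ≤
      ((∑ i, |μ i|) * (2 * (n + 1) : ℝ) ^ (n + 1) * ((n + 1 : ℝ)) ^ (n + 1)) *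
        (M0 / u ^ k + u ^ (n + 1 - k) * Mm) := by
  have hM0nn : 0 ≤ M0 := le_trans (abs_nonneg _) (hM0 0 (by norm_num))
  have hMmnn : 0 ≤ Mm := le_trans (abs_nonneg _) (hMm 0 (by norm_num))
  have hnR : (1 : ℝ) ≤ (n : ℝ) := by exact_mod_cast hn
  set d : ℝ := u / (2 * n) with hd
  have hdpos : 0 < d := by positivity
  have hdu : d ≤ u := by
    rw [hd, div_le_iff₀ (by linarith)]
    nlinarith
  set c : ℝ := if x ≤ 1 / 2 then d else -d with hc
  have hcabs : |c| = d := by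
    rw [hc]; split_ifs <;> simp [abs_of_pos hdpos, abs_of_neg (neg_neg_iff_pos.2 hdpos)]
  have hc0 : c ≠ 0 := by
    intro h; rw [h] at hcabs; simp at hcabs; linarith
  -- all the relevant points stay in [0,1]
  have hmem : ∀ t ∈ Icc (0 : ℝ) (n : ℝ), x + c * t ∈ Icc (0 : ℝ) 1 := by
    intro t ht
    have hct : |c * t| ≤ u / 2 := by
      rw [abs_mul, hcabs, abs_of_nonneg ht.1, hd, div_mul_eq_mul_div,
        div_le_div_iff₀ (by linarith) (by norm_num)]
      nlinarith [ht.2, hu0.le]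
    have h1 := (abs_le.1 hct).1
    have h2 := (abs_le.1 hct).2
    rcases le_or_gt x (1 / 2) with hx2 | hx2
    · have hcd : c = d := if_pos hx2
      constructor
      · have : 0 ≤ c * t := by rw [hcd]; exact mul_nonneg hdpos.le ht.1
        linarith [hx.1]
      · linarith
    · have hcd : c = -d := if_neg (not_le.2 hx2)
      constructor
      · linarith
      · have : c * t ≤ 0 := by rw [hcd]; nlinarith [ht.1, hdpos.le]
        linarith [hx.2]
  -- the rescaled function and its derivatives
  set v : ℝ → ℝ := fun t => w (x + c * t) with hv
  have hvC : ContDiff ℝ ((n + 1 : ℕ) : ℕ∞) v :=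
    hw.comp (contDiff_const.add (contDiff_const.mul contDiff_id))
  have hvder := iterDeriv_affine hw x c
  have hnpos : (0 : ℝ) < (n : ℝ) := by linarith
  have hUD : UniqueDiffOn ℝ (Icc (0 : ℝ) (n : ℝ)) := uniqueDiffOn_Icc hnpos
  have hbound : ∀ y ∈ Icc (0 : ℝ) (n : ℝ),
      ‖iteratedDerivWithin (n + 1) v (Icc (0 : ℝ) (n : ℝ)) y‖ ≤ d ^ (n + 1) * Mm := by
    intro y hy
    rw [Real.norm_eq_abs, iterDerivWithin_eq hvC le_rfl hUD hy, hvder (n + 1) le_rfl y,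
      abs_mul, abs_pow, hcabs]
    exact mul_le_mul_of_nonneg_left (hMm _ (hmem y hy)) (by positivity)
  set a : ℕ → ℝ := fun j => (j.factorial : ℝ)⁻¹ * (c ^ j * iteratedDeriv j w x) with ha
  have h0mem : (0 : ℝ) ∈ Icc (0 : ℝ) (n : ℝ) := ⟨le_rfl, hnpos.le⟩
  have htayval : ∀ i : Fin (n + 1), taylorWithinEval v n (Icc (0 : ℝ) (n : ℝ)) 0 (i : ℝ)
      = ∑ j ∈ range (n + 1), (i : ℝ) ^ j * a j := by
    intro i
    rw [taylor_within_apply]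
    refine Finset.sum_congr rfl fun j hj => ?_
    rw [iterDerivWithin_eq hvC (mem_range.1 hj).le hUD h0mem,
      show iteratedDeriv j v 0 = c ^ j * iteratedDeriv j w x from by
        simpa using hvder j (mem_range.1 hj).le 0]
    simp only [ha, smul_eq_mul, sub_zero]
    ring
  have himem : ∀ i : Fin (n + 1), (i : ℝ) ∈ Icc (0 : ℝ) (n : ℝ) :=
    fun i => ⟨by positivity, by exact_mod_cast i.is_le⟩
  set R : Fin (n + 1) → ℝ :=
    fun i => w (x + c * i) - ∑ j ∈ range (n + 1), (i : ℝ) ^ j * a j with hRdef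
  have hRbound : ∀ i : Fin (n + 1), |R i| ≤ (n + 1 : ℝ) ^ (n + 1) * (d ^ (n + 1) * Mm) := by
    intro i
    have h := taylor_mean_remainder_bound (f := v) (a := 0) (b := (n : ℝ)) (x := (i : ℝ))
      (n := n) hnpos.le (hvC.contDiffOn) (himem i) hbound
    rw [htayval i] at h
    have hvi : v (i : ℝ) = w (x + c * i) := rfl
    have h1 : |R i| ≤ d ^ (n + 1) * Mm * (i : ℝ) ^ (n + 1) / (n.factorial : ℝ) := by
      simpa [hRdef, Real.norm_eq_abs, hvi] using h
    refine h1.trans ?_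
    have hi : (i : ℝ) ≤ (n + 1 : ℝ) := by
      have := i.is_le; push_cast; exact_mod_cast le_trans (Nat.cast_le.2 this) (by norm_num)
    have hfac : (1 : ℝ) ≤ (n.factorial : ℝ) := by exact_mod_cast n.factorial_pos
    calc d ^ (n + 1) * Mm * (i : ℝ) ^ (n + 1) / (n.factorial : ℝ)
        ≤ d ^ (n + 1) * Mm * (n + 1 : ℝ) ^ (n + 1) / 1 := by
          gcongr
        _ = (n + 1 : ℝ) ^ (n + 1) * (d ^ (n + 1) * Mm) := by ring
  have hkmem : k ∈ range (n + 1) := mem_range.2 (by omega)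
  have hkfac : (k.factorial : ℝ) ≠ 0 := by exact_mod_cast k.factorial_ne_zero
  have hkey : c ^ k * iteratedDeriv k w x =
      (∑ i : Fin (n + 1), μ i * w (x + c * i)) - ∑ i : Fin (n + 1), μ i * R i := by
    have hW : ∀ i : Fin (n + 1),
        w (x + c * i) = (∑ j ∈ range (n + 1), (i : ℝ) ^ j * a j) + R i := by
      intro i; rw [hRdef]; ring
    have hmain : ∑ i : Fin (n + 1), μ i * w (x + c * i)
        = ∑ j ∈ range (n + 1), (∑ i : Fin (n + 1), μ i * (i : ℝ) ^ j) * a j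
          + ∑ i : Fin (n + 1), μ i * R i := by
      calc ∑ i : Fin (n + 1), μ i * w (x + c * i)
          = ∑ i : Fin (n + 1),
              ((∑ j ∈ range (n + 1), μ i * ((i : ℝ) ^ j * a j)) + μ i * R i) := by
            refine Finset.sum_congr rfl fun i _ => ?_
            rw [hW i, mul_add, Finset.mul_sum]
        _ = ∑ i : Fin (n + 1), ∑ j ∈ range (n + 1), μ i * ((i : ℝ) ^ j * a j)
              + ∑ i : Fin (n + 1), μ i * R i := Finset.sum_add_distrib
        _ = ∑ j ∈ range (n + 1), ∑ i : Fin (n + 1), μ i * ((i : ℝ) ^ j * a j)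
              + ∑ i : Fin (n + 1), μ i * R i := by rw [Finset.sum_comm]
        _ = ∑ j ∈ range (n + 1), (∑ i : Fin (n + 1), μ i * (i : ℝ) ^ j) * a j
              + ∑ i : Fin (n + 1), μ i * R i := by
            congr 1
            refine Finset.sum_congr rfl fun j _ => ?_
            rw [Finset.sum_mul]
            exact Finset.sum_congr rfl fun i _ => by ring
    rw [hmain]
    have hsum2 : ∑ j ∈ range (n + 1), (∑ i : Fin (n + 1), μ i * (i : ℝ) ^ j) * a j
        = (k.factorial : ℝ) * a k := by
      rw [Finset.sum_congr rfl fun j hj => by rw [hμ j (mem_range.1 hj)]]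
      simp [ite_mul, Finset.sum_ite_eq', hkmem]
    rw [hsum2, ha]
    field_simp
    ring
  -- bound the two sums
  set S : ℝ := ∑ i : Fin (n + 1), |μ i| with hSdef
  have hSnn : 0 ≤ S := Finset.sum_nonneg fun i _ => abs_nonneg _
  have hmain : d ^ k * |iteratedDeriv k w x|
      ≤ S * M0 + S * ((n + 1 : ℝ) ^ (n + 1) * (d ^ (n + 1) * Mm)) := by
    have e1 : d ^ k * |iteratedDeriv k w x| = |c ^ k * iteratedDeriv k w x| := by
      rw [abs_mul, abs_pow, hcabs]
    rw [e1, hkey]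
    have t1 : |∑ i : Fin (n + 1), μ i * w (x + c * i)| ≤ S * M0 := by
      refine (Finset.abs_sum_le_sum_abs _ _).trans ?_
      rw [hSdef, Finset.sum_mul]
      refine Finset.sum_le_sum fun i _ => ?_
      rw [abs_mul]
      exact mul_le_mul_of_nonneg_left (hM0 _ (hmem _ (himem i))) (abs_nonneg _)
    have t2 : |∑ i : Fin (n + 1), μ i * R i|
        ≤ S * ((n + 1 : ℝ) ^ (n + 1) * (d ^ (n + 1) * Mm)) := by
      refine (Finset.abs_sum_le_sum_abs _ _).trans ?_
      rw [hSdef, Finset.sum_mul]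
      refine Finset.sum_le_sum fun i _ => ?_
      rw [abs_mul]
      exact mul_le_mul_of_nonneg_left (hRbound i) (abs_nonneg _)
    calc |(∑ i : Fin (n + 1), μ i * w (x + c * i)) - ∑ i : Fin (n + 1), μ i * R i|
        ≤ |∑ i : Fin (n + 1), μ i * w (x + c * i)| + |∑ i : Fin (n + 1), μ i * R i| :=
          abs_sub _ _
      _ ≤ _ := add_le_add t1 t2
  have hdkpos : (0:ℝ) < d ^ k := pow_pos hdpos k
  have h2 : |iteratedDeriv k w x|
      ≤ (S * M0 + S * ((n + 1 : ℝ) ^ (n + 1) * (d ^ (n + 1) * Mm))) / d ^ k := by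
    rw [le_div_iff₀ hdkpos]
    linarith [hmain]
  refine h2.trans ?_
  set B : ℝ := (2 * (n + 1) : ℝ) ^ (n + 1) with hBdef
  set D : ℝ := ((n + 1 : ℝ)) ^ (n + 1) with hDdef
  have hB1 : (1 : ℝ) ≤ B := by
    calc (1:ℝ) = 1 ^ (n+1) := (one_pow _).symm
      _ ≤ B := pow_le_pow_left₀ (by norm_num) (by push_cast; linarith) _
  have hD1 : (1 : ℝ) ≤ D := by
    calc (1:ℝ) = 1 ^ (n+1) := (one_pow _).symm
      _ ≤ D := pow_le_pow_left₀ (by norm_num) (by push_cast; linarith) _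
  have hpow : ((2 * n : ℝ)) ^ k ≤ B := by
    calc ((2 * n : ℝ)) ^ k ≤ (2 * (n + 1) : ℝ) ^ k :=
          pow_le_pow_left₀ (by positivity) (by push_cast; linarith) k
      _ ≤ B := pow_le_pow_right₀ (by push_cast; linarith) (by omega)
  have hdk : d ^ k = u ^ k / (2 * (n : ℝ)) ^ k := by rw [hd, div_pow]
  have hsplit : (S * M0 + S * (D * (d ^ (n + 1) * Mm))) / d ^ k
      = S * M0 / d ^ k + S * D * Mm * d ^ (n + 1 - k) := by
    rw [add_div]
    congr 1
    have hde : d ^ (n + 1) = d ^ (n + 1 - k) * d ^ k := by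
      rw [← pow_add]
      congr 1
      omega
    rw [hde]
    field_simp
  rw [hsplit]
  have expand : S * B * D * (M0 / u ^ k + u ^ (n + 1 - k) * Mm)
      = S * B * D * (M0 / u ^ k) + S * B * D * (u ^ (n + 1 - k) * Mm) := by ring
  rw [expand]
  refine add_le_add ?_ ?_
  · -- first term
    have e : S * M0 / d ^ k = S * M0 * (2 * (n : ℝ)) ^ k / u ^ k := by
      rw [hdk, div_div_eq_mul_div]
    rw [e, show S * B * D * (M0 / u ^ k) = S * B * D * M0 / u ^ k from by ring,
      div_le_div_iff₀ (pow_pos hu0 k) (pow_pos hu0 k)]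
    have h1 : S * M0 * (2 * (n : ℝ)) ^ k ≤ S * M0 * B :=
      mul_le_mul_of_nonneg_left hpow (mul_nonneg hSnn hM0nn)
    have h2 : S * M0 * B ≤ S * M0 * B * D :=
      le_mul_of_one_le_right (by positivity) hD1
    have h3 : S * M0 * (2 * (n : ℝ)) ^ k ≤ S * B * D * M0 := by
      calc S * M0 * (2 * (n : ℝ)) ^ k ≤ S * M0 * B * D := h1.trans h2
        _ = S * B * D * M0 := by ring
    exact mul_le_mul_of_nonneg_right h3 (by positivity)
  · have hdpow : d ^ (n + 1 - k) ≤ u ^ (n + 1 - k) := pow_le_pow_left₀ hdpos.le hdu _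
    have h1 : S * D * Mm * d ^ (n + 1 - k) ≤ S * D * Mm * u ^ (n + 1 - k) :=
      mul_le_mul_of_nonneg_left hdpow (by positivity)
    have h2 : S * D * Mm * u ^ (n + 1 - k) ≤ B * (S * D * Mm * u ^ (n + 1 - k)) :=
      le_mul_of_one_le_left (by positivity) hB1
    calc S * D * Mm * d ^ (n + 1 - k) ≤ B * (S * D * Mm * u ^ (n + 1 - k)) := h1.trans h2
      _ = S * B * D * (u ^ (n + 1 - k) * Mm) := by ring

/-- Kolmogorov–Landau inequality on the unit interval: for each integer `m ≥ 2` there is a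
constant `C_m > 0` such that for every `w ∈ C^m`, every `k ∈ {1,…,m-1}` and every
`u ∈ (0,1]`,
`‖w^{(k)}‖_{L^∞([0,1])} ≤ C_m (‖w‖_{L^∞([0,1])}/u^k + u^{m-k} ‖w^{(m)}‖_{L^∞([0,1])})`. -/
theorem kolmogorov_landau (m : ℕ) (hm : 2 ≤ m) :
    ∃ C : ℝ, 0 < C ∧ ∀ w : ℝ → ℝ, ContDiff ℝ (m : ℕ∞) w →
      ∀ k : ℕ, 1 ≤ k → k ≤ m - 1 → ∀ u : ℝ, 0 < u → u ≤ 1 →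
        (⨆ x : Set.Icc (0:ℝ) 1, |iteratedDeriv k w x|) ≤
          C * ((⨆ x : Set.Icc (0:ℝ) 1, |w x|) / u ^ k +
            u ^ (m - k) * (⨆ x : Set.Icc (0:ℝ) 1, |iteratedDeriv m w x|)) := by
  obtain ⟨n, rfl⟩ : ∃ n, m = n + 1 := ⟨m - 1, by omega⟩
  have hn : 1 ≤ n := by omega
  have hμex : ∀ k : ℕ, ∃ μ : Fin (n + 1) → ℝ, ∀ j : ℕ, j < n + 1 →
      ∑ i : Fin (n + 1), μ i * (i : ℝ) ^ j = if j = k then (k.factorial : ℝ) else 0 :=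
    fun k => exists_coeffs (n + 1) k
  choose μ hμ using hμex
  set Stot : ℝ := ∑ k ∈ range (n + 1), ∑ i : Fin (n + 1), |μ k i| with hStot
  have hStotnn : 0 ≤ Stot := Finset.sum_nonneg fun k _ => Finset.sum_nonneg fun i _ => abs_nonneg _
  refine ⟨Stot * (2 * (n + 1) : ℝ) ^ (n + 1) * ((n + 1 : ℝ)) ^ (n + 1) + 1, by positivity, ?_⟩
  intro w hw k hk1 hk2 u hu0 hu1
  have hk2' : k ≤ n := by omega
  have hwc : ContDiff ℝ ((n + 1 : ℕ) : ℕ∞) w := by exact_mod_cast hw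
  haveI : Nonempty (Set.Icc (0:ℝ) 1) := ⟨⟨0, by norm_num⟩⟩
  -- boundedness of the suprema
  have hbdd : ∀ g : ℝ → ℝ, Continuous g →
      BddAbove (Set.range fun x : Set.Icc (0:ℝ) 1 => |g x|) := by
    intro g hg
    have : (Set.range fun x : Set.Icc (0:ℝ) 1 => |g x|)
        = (fun y => |g y|) '' (Set.Icc (0:ℝ) 1) := by
      rw [Set.image_eq_range]
    rw [this]
    exact isCompact_Icc.bddAbove_image hg.abs.continuousOn
  set M0 : ℝ := ⨆ x : Set.Icc (0:ℝ) 1, |w x| with hM0def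
  set Mm : ℝ := ⨆ x : Set.Icc (0:ℝ) 1, |iteratedDeriv (n + 1) w x| with hMmdef
  have hM0 : ∀ y ∈ Set.Icc (0:ℝ) 1, |w y| ≤ M0 := fun y hy =>
    le_ciSup (hbdd w hwc.continuous) ⟨y, hy⟩
  have hMm : ∀ y ∈ Set.Icc (0:ℝ) 1, |iteratedDeriv (n + 1) w y| ≤ Mm := fun y hy =>
    le_ciSup (hbdd _ (hwc.continuous_iteratedDeriv (n + 1) (by exact_mod_cast le_rfl))) ⟨y, hy⟩
  have hpt : ∀ x ∈ Set.Icc (0:ℝ) 1, |iteratedDeriv k w x| ≤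
      ((∑ i, |μ k i|) * (2 * (n + 1) : ℝ) ^ (n + 1) * ((n + 1 : ℝ)) ^ (n + 1)) *
        (M0 / u ^ k + u ^ (n + 1 - k) * Mm) :=
    fun x hx => pointwise_bound hn hwc hk1 hk2' (μ k) (hμ k) hM0 hMm hu0 hu1 hx
  refine ciSup_le fun x => ?_
  refine (hpt x x.2).trans ?_
  have hM0nn : 0 ≤ M0 := le_trans (abs_nonneg _) (hM0 0 (by norm_num))
  have hMmnn : 0 ≤ Mm := le_trans (abs_nonneg _) (hMm 0 (by norm_num))
  have hE : 0 ≤ M0 / u ^ k + u ^ (n + 1 - k) * Mm := by positivity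
  have hSk : (∑ i, |μ k i|) ≤ Stot := by
    rw [hStot]
    exact Finset.single_le_sum (f := fun k' => ∑ i : Fin (n + 1), |μ k' i|)
      (fun k' _ => Finset.sum_nonneg fun i _ => abs_nonneg _) (mem_range.2 (by omega))
  refine mul_le_mul_of_nonneg_right ?_ hE
  have hBnn : (0:ℝ) ≤ (2 * (n + 1) : ℝ) ^ (n + 1) := by positivity
  have hDnn : (0:ℝ) ≤ ((n + 1 : ℝ)) ^ (n + 1) := by positivity
  nlinarith [mul_le_mul_of_nonneg_right (mul_le_mul_of_nonneg_right hSk hBnn) hDnn]
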